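/- If a full-dimensional lattice polytope P in M_ℝ is a ℤ-join of faces F and G, then P is a Cayley join of F and G. -/

import Mathlib

open Pointwise
open scoped Classical

noncomputable section

namespace GorST

/-- Points of `d`-dimensional real space. -/
abbrev Pt (n : ℕ) := Fin n → ℝ

/-- A point of the standard lattice `ℤ^n ⊂ ℝ^n`. -/
def isLatticePt {n : ℕ} (x : Pt n) : Prop := ∀ i, ∃ k : ℤ, x i = (k : ℝ)

/-- The standard lattice `ℤ^n` inside `ℝ^n`. -/
def stdL (n : ℕ) : Set (Pt n) := {x | isLatticePt x}

/-- The standard pairing (dot product). -/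
def dot {n : ℕ} (x y : Pt n) : ℝ := ∑ i, x i * y i

/-- `S` is a lattice polytope with respect to the lattice `L`:
it is the convex hull of finitely many points of `L`.  (The empty set is allowed.) -/
def IsLat {n : ℕ} (L S : Set (Pt n)) : Prop :=
  ∃ V : Finset (Pt n), ↑V ⊆ L ∧ S = convexHull ℝ (V : Set (Pt n))

/-- `F` is a face of `S` (exposed face; this includes the improper faces `∅` and `S`). -/
def IsFaceOf {n : ℕ} (F S : Set (Pt n)) : Prop := IsExposed ℝ S F

/-- Dimension of a polytope, with `dim ∅ = -1`. -/
def dimP {n : ℕ} (S : Set (Pt n)) : ℤ :=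
  if S = ∅ then -1 else (Module.finrank ℝ (affineSpan ℝ S).direction : ℤ)

/-- Dimension as a natural number (for nonempty polytopes). -/
def dimNat {n : ℕ} (S : Set (Pt n)) : ℕ := Module.finrank ℝ (affineSpan ℝ S).direction

/-- Number of points of `L` in the `k`-th dilate of `S` (Ehrhart counting function). -/
def ehr {n : ℕ} (L S : Set (Pt n)) (k : ℕ) : ℕ := (L ∩ (k : ℝ) • S).ncard

/-- The `h^*`-polynomial of a lattice polytope `S` with respect to the lattice `L`,
i.e. the numerator of the Ehrhart series `1 + ∑_{m ≥ 1} |L ∩ mS| t^m = h^*(t)/(1-t)^{dim S + 1}`;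
its coefficients are given by `h^*_i = ∑_j (-1)^j (dim S + 1 choose j) ehr(i - j)`.
By convention `h^*_∅ = 1`. -/
def hStarL {n : ℕ} (L S : Set (Pt n)) : Polynomial ℤ :=
  if S = ∅ then 1
  else
    ∑ i ∈ Finset.range (dimNat S + 1),
      Polynomial.C
          (∑ j ∈ Finset.range (i + 1),
            (-1 : ℤ) ^ j * ((dimNat S + 1).choose j : ℤ) * (ehr L S (i - j) : ℤ)) *
        Polynomial.X ^ i

/-- The degree of a lattice polytope: the degree of its `h^*`-polynomial. -/
def degL {n : ℕ} (L S : Set (Pt n)) : ℕ := (hStarL L S).natDegree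

/-- The codegree of a lattice polytope: `dim S + 1 - deg S` (and `0` for `∅`). -/
def codegL {n : ℕ} (L S : Set (Pt n)) : ℤ :=
  if S = ∅ then 0 else dimP S + 1 - degL L S

/-- Truncation of a polynomial to its terms of degree `< k`. -/
def truncLT (k : ℕ) (p : Polynomial ℤ) : Polynomial ℤ :=
  ∑ i ∈ Finset.range k, Polynomial.C (p.coeff i) * Polynomial.X ^ i

/-- The `g`-polynomial of the interval `[F, G]` in the (Eulerian) face poset of the
polytope `G`, computed with the recursion of Stanley:
`g = h = 1` in rank `0`, `h([F,G],t) = ∑_{F < H ≤ G} (t-1)^{ρ(H)-1} g([H,G],t)` and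
`g([F,G],t) = τ_{< e/2}((1-t) h([F,G],t))` in rank `e > 0`.
The first argument is a fuel parameter (any value `≥` the rank of the interval
gives the correct answer). -/
def gAux {n : ℕ} : ℕ → Set (Pt n) → Set (Pt n) → Polynomial ℤ
  | 0, _, _ => 1
  | fuel + 1, F, G =>
    if F = G then 1
    else
      truncLT (((dimP G - dimP F).toNat + 1) / 2)
        ((1 - Polynomial.X) *
          ∑ᶠ H ∈ {H : Set (Pt n) | IsFaceOf H G ∧ F ⊆ H ∧ F ≠ H},
            (Polynomial.X - 1) ^ ((dimP H - dimP F - 1).toNat) * gAux fuel H G)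

/-- The `g`-polynomial `g([F,G], t)` of the interval of faces between `F` and `G`. -/
def gPoly {n : ℕ} (F G : Set (Pt n)) : Polynomial ℤ := gAux (dimNat G + 2) F G

/-- The polynomial `S̃(S, t) = ∑_{∅ ≤ F ≤ S} (-1)^{dim S - dim F} h^*_F(t) g([F,S],t)`
of Borisov and Mavlyutov, with respect to the lattice `L`. -/
def StildeL {n : ℕ} (L S : Set (Pt n)) : Polynomial ℤ :=
  ∑ᶠ F ∈ {F : Set (Pt n) | IsFaceOf F S},
    (-1 : Polynomial ℤ) ^ ((dimP S - dimP F).toNat) * (hStarL L F * gPoly F S)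

/-- The lattice dual to `L ∩ W` inside the subspace `W` (under the dot product pairing). -/
def dualLatIn {n : ℕ} (L : Set (Pt n)) (W : Submodule ℝ (Pt n)) : Set (Pt n) :=
  {y | y ∈ W ∧ ∀ x ∈ L ∩ (W : Set (Pt n)), ∃ k : ℤ, dot y x = (k : ℝ)}

/-- `S` is a reflexive polytope with respect to the lattice `L` (inside its linear span):
`S` is a lattice polytope w.r.t. `L ∩ span S`, `0` lies in its (relative) interior, and the
dual polytope `{y ∈ span S | ⟨y,x⟩ ≥ -1 for all x ∈ S}` is a lattice polytope w.r.t. the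
dual lattice. -/
def IsReflexiveL {n : ℕ} (L S : Set (Pt n)) : Prop :=
  IsLat (L ∩ (Submodule.span ℝ S : Set (Pt n))) S ∧
  (0 : Pt n) ∈ intrinsicInterior ℝ S ∧
  IsLat (dualLatIn L (Submodule.span ℝ S))
    {y | y ∈ Submodule.span ℝ S ∧ ∀ x ∈ S, -1 ≤ dot y x}

/-- `m₀` witnesses that `S` is Gorenstein of index `r` w.r.t. `L`: `m₀` is a lattice point
in the (relative) interior of `r S` and `r S - m₀` is reflexive. -/
def GorWitness {n : ℕ} (L S : Set (Pt n)) (r : ℕ) (m₀ : Pt n) : Prop :=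
  m₀ ∈ L ∧ m₀ ∈ intrinsicInterior ℝ ((r : ℝ) • S) ∧
  IsReflexiveL L ((fun x => x - m₀) '' ((r : ℝ) • S))

/-- `S` is a Gorenstein polytope of index `r` with respect to the lattice `L`:
`r S` contains a unique interior lattice point `m₀`, and `r S - m₀` is reflexive. -/
def IsGorensteinL {n : ℕ} (L S : Set (Pt n)) (r : ℕ) : Prop :=
  IsLat L S ∧ 0 < r ∧ (∃ m₀, GorWitness L S r m₀) ∧
  ∀ m₁ m₂,
    (m₁ ∈ L ∧ m₁ ∈ intrinsicInterior ℝ ((r : ℝ) • S)) →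
    (m₂ ∈ L ∧ m₂ ∈ intrinsicInterior ℝ ((r : ℝ) • S)) → m₁ = m₂

/-- `S` is a Gorenstein polytope (of some index) w.r.t. `L`; by convention `∅` is Gorenstein. -/
def IsGorensteinPoly {n : ℕ} (L S : Set (Pt n)) : Prop :=
  S = ∅ ∨ ∃ r, IsGorensteinL L S r

/-- Embedding at height 1: `x ↦ (x, 1)`. -/
def emb1 {n : ℕ} : Pt n → Pt (n + 1) := fun x => Fin.snoc x 1

/-- Embedding at height 0: `x ↦ (x, 0)`. -/
def emb0 {n : ℕ} : Pt n → Pt (n + 1) := fun x => Fin.snoc x 0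

/-- The linear span of `S × {1}`: the span of the cone `C_S` over `S`. -/
def Wspan {n : ℕ} (S : Set (Pt n)) : Submodule ℝ (Pt (n + 1)) :=
  Submodule.span ℝ (emb1 '' S)

/-- The dual Gorenstein polytope `S^×` of a Gorenstein polytope `S` of index `r` with
unique interior lattice point `m₀` of `r S`: the support polytope
`{y ∈ C_S^∨ | ⟨y, (m₀, r)⟩ = 1}` of the dual of the cone `C_S` over `S × {1}`
(taken inside the linear span of `S × {1}`, using the dot product as the pairing). -/
def gorDual {n : ℕ} (S : Set (Pt n)) (r : ℕ) (m₀ : Pt n) : Set (Pt (n + 1)) :=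
  {y | y ∈ Wspan S ∧ (∀ x ∈ S, 0 ≤ dot y (emb1 x)) ∧ dot y (Fin.snoc m₀ (r : ℝ)) = 1}

/-- The face `F^*` of the dual Gorenstein polytope `S^×` corresponding to the face `F` of
`S`:  `F^* = {y ∈ S^× | ⟨y, (x,1)⟩ = 0 for all x ∈ F}`. -/
def faceDual {n : ℕ} (S : Set (Pt n)) (r : ℕ) (m₀ : Pt n) (F : Set (Pt n)) :
    Set (Pt (n + 1)) :=
  {y | y ∈ gorDual S r m₀ ∧ ∀ x ∈ F, dot y (emb1 x) = 0}

/-- The lattice dual (under the dot product) to the lattice `ℤ^{n+1} ∩ span(S × {1})`;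
this is the lattice with respect to which `S^×` is a lattice polytope. -/
def dualLatOf {n : ℕ} (S : Set (Pt n)) : Set (Pt (n + 1)) :=
  {y | y ∈ Wspan S ∧ ∀ x, isLatticePt x → x ∈ Wspan S → ∃ k : ℤ, dot y x = (k : ℝ)}

/-- The field `ℚ(u,v)` of rational functions in two variables. -/
abbrev KK : Type := FractionRing (MvPolynomial (Fin 2) ℚ)

/-- The rational function `u`. -/
def uu : KK := algebraMap (MvPolynomial (Fin 2) ℚ) KK (MvPolynomial.X 0)

/-- The rational function `v`. -/
def vv : KK := algebraMap (MvPolynomial (Fin 2) ℚ) KK (MvPolynomial.X 1)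

/-- The stringy `E`-function of a Gorenstein polytope `S` of index `r` (with `m₀` the unique
interior lattice point of `r S`):
`E_st(S; u,v) = (uv)^{-r} ∑_{∅ ≤ F ≤ S} (-u)^{dim F + 1} S̃(F, u⁻¹ v) S̃(F^*, uv) ∈ ℚ(u,v)`. -/
def Est {n : ℕ} (S : Set (Pt n)) (r : ℕ) (m₀ : Pt n) : KK :=
  (uu * vv) ^ (-(r : ℤ)) *
    ∑ᶠ F ∈ {F : Set (Pt n) | IsFaceOf F S},
      (-uu) ^ (dimP F + 1) * Polynomial.aeval (uu⁻¹ * vv) (StildeL (stdL n) F) *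
        Polynomial.aeval (uu * vv) (StildeL (dualLatOf S) (faceDual S r m₀ F))

/-- An element of `ℚ(u,v)` "is a polynomial": it lies in `ℤ[u,v]`. -/
def IsPolyEst (e : KK) : Prop :=
  ∃ p : MvPolynomial (Fin 2) ℤ,
    e = MvPolynomial.aeval (fun i : Fin 2 => if i = 0 then uu else vv) p

/-- `S` is a join of its faces `F` and `G`. -/
def IsJoin {n : ℕ} (S F G : Set (Pt n)) : Prop :=
  IsFaceOf F S ∧ IsFaceOf G S ∧ S = convexHull ℝ (F ∪ G) ∧ dimP F + dimP G = dimP S - 1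

/-- `S` and `T` are isomorphic lattice polytopes (with respect to the standard lattice):
there is an affine transformation of the ambient space mapping the lattice onto itself
and `S` onto `T`. -/
def IsoLat {n : ℕ} (S T : Set (Pt n)) : Prop :=
  ∃ A : Pt n ≃ᵃ[ℝ] Pt n, (∀ x, isLatticePt x ↔ isLatticePt (A x)) ∧ A '' S = T

/-- The Cayley polytope `F * G` of two polytopes: the convex hull of `F × {1}` and
`G × {0}`. -/
def cayley2 {n : ℕ} (F G : Set (Pt n)) : Set (Pt (n + 1)) :=
  convexHull ℝ (emb1 '' F ∪ emb0 '' G)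

/-- `S` is a Cayley join of its faces `F` and `G`:
`dim F + dim G = dim S - 1` and the Cayley polytope `F * G` is isomorphic (as a lattice
polytope) to `S` (embedded at height 0). -/
def IsCayleyJoin {n : ℕ} (S F G : Set (Pt n)) : Prop :=
  IsFaceOf F S ∧ IsFaceOf G S ∧ dimP F + dimP G = dimP S - 1 ∧
  IsoLat (cayley2 F G) (emb0 '' S)

/-- `S` is a ℤ-join of its faces `F` and `G`: `S` is the convex hull of `F ∪ G` and the
natural map `M(F) ⊕ M(G) → M ⊕ ℤ` is an isomorphism, where `M(F) = lin(F × {1}) ∩ (M ⊕ ℤ)`;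
i.e. every lattice point of `M ⊕ ℤ` is uniquely the sum of a lattice point in `lin(F × {1})`
and a lattice point in `lin(G × {1})`. -/
def IsZJoin {n : ℕ} (S F G : Set (Pt n)) : Prop :=
  IsFaceOf F S ∧ IsFaceOf G S ∧ S = convexHull ℝ (F ∪ G) ∧
  ∀ x : Pt (n + 1), isLatticePt x →
    ∃! p : Pt (n + 1) × Pt (n + 1),
      (isLatticePt p.1 ∧ p.1 ∈ Wspan F) ∧ (isLatticePt p.2 ∧ p.2 ∈ Wspan G) ∧
        x = p.1 + p.2

/-- The points of the standard lattice lying in a subspace `W`. -/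
def latIn {n : ℕ} (W : Submodule ℝ (Pt n)) : Set (Pt n) := {x | isLatticePt x ∧ x ∈ W}

/-- `S` (with lattice `LS`) and `T` (with lattice `LT`) are dual Gorenstein polytopes,
with respect to the dot product pairing: the pairing between the spans is perfect, the
lattices are dual to each other, and the cones over `S` and `T` are dual reflexive
Gorenstein cones, each being the support polytope of the dual of the other (cut out by the
interior lattice points `nf` resp. `mm`). -/
def IsDualGorPair {n : ℕ} (LS LT S T : Set (Pt n)) : Prop :=
  (∀ x ∈ Submodule.span ℝ S, (∀ y ∈ Submodule.span ℝ T, dot x y = 0) → x = 0) ∧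
  (∀ y ∈ Submodule.span ℝ T, (∀ x ∈ Submodule.span ℝ S, dot x y = 0) → y = 0) ∧
  IsLat LS S ∧ IsLat LT T ∧
  LT = {y | y ∈ Submodule.span ℝ T ∧ ∀ x ∈ LS, ∃ k : ℤ, dot x y = (k : ℝ)} ∧
  LS = {x | x ∈ Submodule.span ℝ S ∧ ∀ y ∈ LT, ∃ k : ℤ, dot x y = (k : ℝ)} ∧
  ∃ nf ∈ LT, ∃ mm ∈ LS,
    (∀ x ∈ S, dot nf x = 1) ∧ (∀ y ∈ T, dot mm y = 1) ∧
    T = {y | y ∈ Submodule.span ℝ T ∧ (∀ x ∈ S, 0 ≤ dot x y) ∧ dot mm y = 1} ∧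
    S = {x | x ∈ Submodule.span ℝ S ∧ (∀ y ∈ T, 0 ≤ dot x y) ∧ dot nf x = 1}

/-- Orthogonal projection onto the orthogonal complement of `U` (w.r.t. the dot product);
this realizes the quotient of the ambient space by `U`. -/
def perpProj {m : ℕ} (U : Submodule ℝ (Pt m)) : Pt m → Pt m :=
  fun x =>
    (WithLp.linearEquiv 2 ℝ (Fin m → ℝ))
      ((Submodule.orthogonalProjectionOnto
          (Submodule.map (WithLp.linearEquiv 2 ℝ (Fin m → ℝ)).symm.toLinearMap U)ᗮ
          ((WithLp.linearEquiv 2 ℝ (Fin m → ℝ)).symm x) : EuclideanSpace ℝ (Fin m)))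

/-- The `i`-th "unit vector" used for Cayley polytopes: the standard basis vector `e_i` of
`ℤ^{r-1}` for `i < r - 1`, and `0` for `i = r - 1` (the last coordinate is deleted). -/
def unitVec (r : ℕ) (i : Fin r) : Pt (r - 1) := fun j => if (j : ℕ) = (i : ℕ) then 1 else 0

/-- The embedding `x ↦ (x, e_i)` used in the definition of Cayley polytopes. -/
def cayleyEmb {d r : ℕ} (i : Fin r) : Pt d → Pt (d + (r - 1)) :=
  fun x => Fin.append x (unitVec r i)

/-- The Cayley polytope `P_1 * ⋯ * P_r` of a family of polytopes in `ℝ^d`, as a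
(full-dimensional) lattice polytope in `ℝ^{d + r - 1}`. -/
def cayleyFam {d r : ℕ} (Q : Fin r → Set (Pt d)) : Set (Pt (d + (r - 1))) :=
  convexHull ℝ (⋃ i, cayleyEmb i '' Q i)

/-- The face of the Cayley polytope corresponding to a subfamily indexed by `I`. -/
def subCayley {d r : ℕ} (Q : Fin r → Set (Pt d)) (I : Finset (Fin r)) :
    Set (Pt (d + (r - 1))) :=
  convexHull ℝ (⋃ i ∈ I, cayleyEmb i '' Q i)

/-- `S` is an irreducible Gorenstein polytope: it is a nonempty Gorenstein polytope of some
index `r`, with no proper face `F` (`∅ ≠ F ≠ S`) such that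
`codeg F + codeg F^* = r`. -/
def IsIrredGor {n : ℕ} (S : Set (Pt n)) : Prop :=
  S.Nonempty ∧ ∃ r, IsGorensteinL (stdL n) S r ∧
    ∀ m₀, GorWitness (stdL n) S r m₀ →
      ∀ F, IsFaceOf F S → F ≠ ∅ → F ≠ S →
        codegL (stdL n) F + codegL (dualLatOf S) (faceDual S r m₀ F) ≠ (r : ℤ)

/-- `Q` is a nef-partition of the reflexive polytope `P ⊂ ℝ^d`: each `Q i` is a nonempty
lattice polytope containing `0` and `P = Q 1 + ⋯ + Q r` (Minkowski sum) is a reflexive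
polytope of dimension `d`. -/
def IsNefPartition {d r : ℕ} (Q : Fin r → Set (Pt d)) (P : Set (Pt d)) : Prop :=
  (∀ i, (Q i).Nonempty ∧ IsLat (stdL d) (Q i) ∧ (0 : Pt d) ∈ Q i) ∧
  P = ∑ i, Q i ∧ IsReflexiveL (stdL d) P ∧ dimP P = (d : ℤ)

/-- The nef-partition `Q` is irreducible: no nonempty proper subfamily has `0` in the
relative interior of its Minkowski sum. -/
def IsIrredNef {d r : ℕ} (Q : Fin r → Set (Pt d)) : Prop :=
  ∀ I : Finset (Fin r), I.Nonempty → I ≠ Finset.univ →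
    (0 : Pt d) ∉ intrinsicInterior ℝ (∑ i ∈ I, Q i)

/-- `S` is a ℤ-join of the faces `F j`: `S` is the convex hull of their union, and every
lattice point of `M ⊕ ℤ` decomposes uniquely as a sum of lattice points in the spans
`lin(F j × {1})`. -/
def IsMultiZJoin {n k : ℕ} (S : Set (Pt n)) (F : Fin k → Set (Pt n)) : Prop :=
  (∀ j, IsFaceOf (F j) S) ∧ S = convexHull ℝ (⋃ j, F j) ∧
  ∀ x : Pt (n + 1), isLatticePt x →
    ∃! f : Fin k → Pt (n + 1),
      (∀ j, isLatticePt (f j) ∧ f j ∈ Wspan (F j)) ∧ x = ∑ j, f j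

/-- The nef-partition `Q` splits as a direct sum over `ℤ` with respect to the partition
`I` of the index set: each subfamily sums to a reflexive polytope (w.r.t. the induced
lattice), and the lattice `M` is the direct sum of the lattices `M_j = lin(P_{I_j}) ∩ M`. -/
def SplitsOverZ {d r k : ℕ} (Q : Fin r → Set (Pt d)) (I : Fin k → Finset (Fin r)) : Prop :=
  (∀ j, IsReflexiveL (stdL d) (∑ i ∈ I j, Q i)) ∧
  ∀ x : Pt d, isLatticePt x →
    ∃! f : Fin k → Pt d,
      (∀ j, isLatticePt (f j) ∧ f j ∈ Submodule.span ℝ ((∑ i ∈ I j, Q i : Set (Pt d)))) ∧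
        x = ∑ j, f j


/-! ### Auxiliary lemmas for Statement 17 -/

section Aux

lemma isLatticePt_zero {n : ℕ} : isLatticePt (0 : Pt n) := fun _ => ⟨0, by simp⟩

lemma isLatticePt_add {n : ℕ} {x y : Pt n} (hx : isLatticePt x) (hy : isLatticePt y) :
    isLatticePt (x + y) := by
  intro i
  obtain ⟨k, hk⟩ := hx i; obtain ⟨l, hl⟩ := hy i
  exact ⟨k + l, by simp [Pi.add_apply, hk, hl]⟩

lemma isLatticePt_sub {n : ℕ} {x y : Pt n} (hx : isLatticePt x) (hy : isLatticePt y) :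
    isLatticePt (x - y) := by
  intro i
  obtain ⟨k, hk⟩ := hx i; obtain ⟨l, hl⟩ := hy i
  exact ⟨k - l, by simp [Pi.sub_apply, hk, hl]⟩

lemma isLatticePt_smul {n : ℕ} {c : ℝ} {x : Pt n} (hc : ∃ k : ℤ, c = (k : ℝ))
    (hx : isLatticePt x) : isLatticePt (c • x) := by
  intro i
  obtain ⟨k, hk⟩ := hc; obtain ⟨l, hl⟩ := hx i
  exact ⟨k * l, by simp [Pi.smul_apply, hk, hl]⟩

lemma isLatticePt_sum {n : ℕ} {ι : Type*} (s : Finset ι) (f : ι → Pt n)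
    (h : ∀ i ∈ s, isLatticePt (f i)) : isLatticePt (∑ i ∈ s, f i) := by
  classical
  induction s using Finset.induction_on with
  | empty => simpa using isLatticePt_zero
  | insert _ _ hnot ih =>
    rw [Finset.sum_insert hnot]
    exact isLatticePt_add (h _ (Finset.mem_insert_self _ _))
      (ih fun i hi => h i (Finset.mem_insert_of_mem hi))

lemma isLatticePt_single_one {n : ℕ} (i : Fin n) : isLatticePt (Pi.single i (1 : ℝ)) := by
  intro j
  rcases eq_or_ne j i with h | h
  · exact ⟨1, by subst h; simp⟩
  · exact ⟨0, by simp [Pi.single_apply, h]⟩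

lemma isLatticePt_emb1 {n : ℕ} {x : Pt n} (hx : isLatticePt x) : isLatticePt (emb1 x) := by
  intro j
  refine Fin.lastCases ?_ ?_ j
  · exact ⟨1, by simp [emb1]⟩
  · intro i; obtain ⟨k, hk⟩ := hx i; exact ⟨k, by simpa [emb1] using hk⟩

/-- `x ↦ (x, 0)` as a linear map. -/
def emb0L {n : ℕ} : Pt n →ₗ[ℝ] Pt (n + 1) where
  toFun := emb0
  map_add' x y := by
    funext j
    refine Fin.lastCases ?_ ?_ j <;> simp [emb0]
  map_smul' c x := by
    funext j
    refine Fin.lastCases ?_ ?_ j <;> simp [emb0]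

@[simp] lemma emb0L_apply {n : ℕ} (x : Pt n) : emb0L x = emb0 x := rfl

/-- `x ↦ (x, 1)` as an affine map. -/
def EM1 {n : ℕ} : Pt n →ᵃ[ℝ] Pt (n + 1) where
  toFun := emb1
  linear := emb0L
  map_vadd' p v := by
    show emb1 (v + p) = emb0 v + emb1 p
    funext j
    refine Fin.lastCases ?_ ?_ j <;> simp [emb0, emb1]

@[simp] lemma EM1_apply {n : ℕ} (x : Pt n) : EM1 x = emb1 x := rfl

/-- `x ↦ (x, 0)` as an affine map. -/
def EM0 {n : ℕ} : Pt n →ᵃ[ℝ] Pt (n + 1) := emb0L.toAffineMap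

@[simp] lemma EM0_apply {n : ℕ} (x : Pt n) : EM0 x = emb0 x := rfl

lemma emb1_sub_emb1 {n : ℕ} (x y : Pt n) : emb1 x - emb1 y = emb0 (x - y) := by
  funext j
  refine Fin.lastCases ?_ ?_ j <;> simp [emb0, emb1]

lemma emb1_eq_emb0_add {n : ℕ} (x : Pt n) :
    emb1 x = emb0 x + Pi.single (Fin.last n) (1 : ℝ) := by
  funext j
  refine Fin.lastCases ?_ ?_ j
  · simp [emb0, emb1]
  · intro i
    simp [emb0, emb1, Pi.single_apply, (Fin.castSucc_lt_last i).ne]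

lemma emb0L_injective {n : ℕ} : Function.Injective (emb0L (n := n)) := by
  intro x y h
  funext i
  have := congrFun h i.castSucc
  simpa [emb0] using this

lemma emb1_last {n : ℕ} (x : Pt n) : emb1 x (Fin.last n) = 1 := by simp [emb1]

lemma emb0_last {n : ℕ} (x : Pt n) : emb0 x (Fin.last n) = 0 := by simp [emb0]

/-- Every point is the sum of its coordinates times the standard basis vectors. -/
lemma pt_eq_sum_single {n : ℕ} (x : Pt n) : x = ∑ i, x i • (Pi.single i 1 : Pt n) := by
  funext j
  rw [Finset.sum_apply]
  simp [Pi.single_apply, mul_ite]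

/-- The rank of the span of `F × {1}` is `dim F + 1`. -/
lemma finrank_Wspan {n : ℕ} {F : Set (Pt n)} (hF : F.Nonempty) :
    Module.finrank ℝ (Wspan F) = dimNat F + 1 := by
  obtain ⟨f₀, hf₀⟩ := hF
  set p : Pt (n + 1) := emb1 f₀ with hp
  set U : Submodule ℝ (Pt (n + 1)) := vectorSpan ℝ (emb1 '' F) with hU
  have hUle : U ≤ Submodule.span ℝ (emb1 '' F) := by
    rw [hU, vectorSpan_def, Submodule.span_le]
    rintro v hv
    rw [Set.mem_vsub] at hv
    obtain ⟨x, hx, y, hy, rfl⟩ := hv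
    exact Submodule.sub_mem _ (Submodule.subset_span hx) (Submodule.subset_span hy)
  have hWeq : Wspan F = U ⊔ Submodule.span ℝ {p} := by
    apply le_antisymm
    · rw [Wspan, Submodule.span_le]
      rintro _ ⟨f, hf, rfl⟩
      have h1 : emb1 f - p ∈ U := by
        have := vsub_mem_vectorSpan ℝ (Set.mem_image_of_mem emb1 hf)
          (Set.mem_image_of_mem emb1 hf₀)
        simpa [vsub_eq_sub] using this
      have h2 : emb1 f = (emb1 f - p) + p := by abel
      rw [h2]
      exact Submodule.add_mem _ (Submodule.mem_sup_left h1)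
        (Submodule.mem_sup_right (Submodule.mem_span_singleton_self p))
    · refine sup_le hUle ?_
      rw [Submodule.span_le, Set.singleton_subset_iff]
      exact Submodule.subset_span (Set.mem_image_of_mem emb1 hf₀)
  set lam : Pt (n + 1) →ₗ[ℝ] ℝ := LinearMap.proj (Fin.last n) with hlam
  have hUker : U ≤ LinearMap.ker lam := by
    rw [hU, vectorSpan_def, Submodule.span_le]
    rintro v hv
    rw [Set.mem_vsub] at hv
    obtain ⟨x, ⟨x', _, rfl⟩, y, ⟨y', _, rfl⟩, rfl⟩ := hv
    have : lam (emb1 x' -ᵥ emb1 y') = emb1 x' (Fin.last n) - emb1 y' (Fin.last n) := rfl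
    rw [SetLike.mem_coe, LinearMap.mem_ker, this, emb1_last, emb1_last, sub_self]
  have hpne : p ≠ 0 := by
    intro h
    have := congrFun h (Fin.last n)
    rw [hp, emb1_last] at this
    simpa using this
  have hinf : U ⊓ Submodule.span ℝ {p} = ⊥ := by
    rw [eq_bot_iff]
    rintro x ⟨hx1, hx2⟩
    rw [SetLike.mem_coe, Submodule.mem_span_singleton] at hx2
    obtain ⟨c, rfl⟩ := hx2
    have h0 : lam (c • p) = 0 := hUker hx1
    have h1 : lam (c • p) = c := by
      have : lam p = 1 := by rw [hp]; exact emb1_last f₀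
      rw [map_smul, this, smul_eq_mul, mul_one]
    rw [h1] at h0
    simp [h0]
  have hrk : Module.finrank ℝ (Wspan F) = Module.finrank ℝ U + 1 := by
    have := Submodule.finrank_sup_add_finrank_inf_eq U (Submodule.span ℝ {p})
    rw [hinf, finrank_span_singleton hpne, finrank_bot, add_zero] at this
    rw [hWeq, this]
  have hUrk : Module.finrank ℝ U = dimNat F := by
    have himg : (emb1 '' F) -ᵥ (emb1 '' F) = emb0L '' (F -ᵥ F) := by
      ext v
      rw [Set.mem_vsub]
      constructor
      · rintro ⟨x, ⟨x', hx', rfl⟩, y, ⟨y', hy', rfl⟩, rfl⟩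
        refine ⟨x' - y', ?_, ?_⟩
        · rw [Set.mem_vsub]; exact ⟨x', hx', y', hy', rfl⟩
        · simp only [vsub_eq_sub, emb0L_apply, ← emb1_sub_emb1]
      · rintro ⟨w, hw, rfl⟩
        rw [Set.mem_vsub] at hw
        obtain ⟨x, hx, y, hy, rfl⟩ := hw
        exact ⟨emb1 x, Set.mem_image_of_mem _ hx, emb1 y, Set.mem_image_of_mem _ hy,
          by simp only [vsub_eq_sub, emb0L_apply, ← emb1_sub_emb1]⟩
    have : U = Submodule.map emb0L (vectorSpan ℝ F) := by
      rw [hU, vectorSpan_def, vectorSpan_def, himg, Submodule.span_image]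
    rw [this, dimNat, direction_affineSpan]
    exact ((Submodule.equivMapOfInjective emb0L emb0L_injective
      (vectorSpan ℝ F)).symm.finrank_eq)
  rw [hrk, hUrk]

/-- An exposed face of the convex hull of a finite set `V` is the convex hull of a
subset of `V` contained in the face. -/
lemma face_lattice_hull {n : ℕ} {V : Finset (Pt n)} {F S : Set (Pt n)}
    (hSV : S = convexHull ℝ (V : Set (Pt n))) (hF : IsFaceOf F S) :
    ∃ W : Finset (Pt n), ↑W ⊆ (V : Set (Pt n)) ∧ ↑W ⊆ F ∧
      F = convexHull ℝ (W : Set (Pt n)) := by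
  classical
  rcases F.eq_empty_or_nonempty with hFe | hFne
  · exact ⟨∅, by simp, by simp, by simp [hFe]⟩
  obtain ⟨l, hl⟩ := hF hFne
  have hVne : V.Nonempty := by
    rcases Finset.eq_empty_or_nonempty V with h | h
    · exfalso
      obtain ⟨x, hx⟩ := hFne
      have hxS : x ∈ S := hF.subset hx
      rw [hSV, h] at hxS
      simpa using hxS
    · exact h
  set t : ℝ := V.sup' hVne (fun v => l v) with ht
  have hSle : ∀ x ∈ S, l x ≤ t := by
    intro x hx
    rw [hSV] at hx
    have hconv : Convex ℝ {y : Pt n | l y ≤ t} :=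
      convex_halfSpace_le ⟨l.map_add, l.map_smul⟩ t
    have hsub : (V : Set (Pt n)) ⊆ {y : Pt n | l y ≤ t} := by
      intro v hv
      exact Finset.le_sup' (fun v => l v) hv
    exact convexHull_min hsub hconv hx
  obtain ⟨v₀, hv₀V, hv₀⟩ := Finset.exists_mem_eq_sup' hVne (fun v => l v)
  have hv₀S : v₀ ∈ S := by
    rw [hSV]; exact subset_convexHull ℝ _ hv₀V
  have hFt : ∀ x ∈ F, l x = t := by
    intro x hx
    rw [hl] at hx
    exact le_antisymm (hSle x hx.1) (by rw [ht, hv₀]; exact hx.2 v₀ hv₀S)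
  set W : Finset (Pt n) := V.filter (fun v => l v = t) with hW
  have hWV : (W : Set (Pt n)) ⊆ (V : Set (Pt n)) := by
    intro v hv
    exact Finset.filter_subset _ _ hv
  have hWF : (W : Set (Pt n)) ⊆ F := by
    intro v hv
    rw [Finset.mem_coe, hW, Finset.mem_filter] at hv
    rw [hl]
    refine ⟨by rw [hSV]; exact subset_convexHull ℝ _ hv.1, fun y hy => ?_⟩
    rw [hv.2]; exact hSle y hy
  refine ⟨W, hWV, hWF, le_antisymm ?_ ?_⟩
  · -- F ⊆ convexHull W
    intro x hx
    have hxS : x ∈ S := hF.subset hx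
    rw [hSV, Finset.convexHull_eq] at hxS
    obtain ⟨w, hw0, hw1, hwx⟩ := hxS
    have hxsum : ∑ v ∈ V, w v • v = x := by
      rw [Finset.centerMass_eq_of_sum_1 _ _ hw1] at hwx
      simpa using hwx
    have hlx : l x = ∑ v ∈ V, w v * l v := by
      rw [← hxsum, map_sum]
      simp
    have hkey : ∀ v ∈ V, w v * (t - l v) = 0 := by
      rw [← Finset.sum_eq_zero_iff_of_nonneg]
      · have : ∑ v ∈ V, w v * (t - l v) = t - l x := by
          simp only [mul_sub]
          rw [Finset.sum_sub_distrib, ← Finset.sum_mul, hw1, one_mul, hlx]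
        rw [this, hFt x hx, sub_self]
      · intro v hv
        exact mul_nonneg (hw0 v hv) (sub_nonneg.2 (Finset.le_sup' (fun v => l v) hv))
    have hzero : ∀ v ∈ V, v ∉ W → w v = 0 := by
      intro v hv hvW
      rcases mul_eq_zero.1 (hkey v hv) with h | h
      · exact h
      · exfalso
        apply hvW
        rw [hW, Finset.mem_filter]
        exact ⟨hv, by linarith [sub_eq_zero.1 h]⟩
    have hsumW : ∑ v ∈ W, w v = 1 := by
      rw [← hw1]
      exact (Finset.sum_subset (Finset.filter_subset _ _)
        (fun v hv hvW => hzero v hv hvW)).symm ▸ rfl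
    have hmassW : W.centerMass w id = x := by
      rw [Finset.centerMass_eq_of_sum_1 _ _ hsumW]
      rw [← hxsum]
      refine Finset.sum_subset (Finset.filter_subset _ _) ?_
      intro v hv hvW
      rw [hzero v hv hvW, zero_smul]
    rw [← hmassW]
    exact Finset.centerMass_mem_convexHull W (fun v hv => hw0 v (hWV hv))
      (by rw [hsumW]; norm_num) (fun v hv => Finset.mem_coe.2 hv)
  · -- convexHull W ⊆ F
    have hFconv : Convex ℝ F := by
      have : F = S ∩ {x | t ≤ l x} := by
        ext x
        constructor
        · intro hx
          exact ⟨hF.subset hx, le_of_eq (hFt x hx).symm⟩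
        · rintro ⟨hxS, hxt⟩
          rw [hl]
          exact ⟨hxS, fun y hy => le_trans (hSle y hy) hxt⟩
      rw [this]
      exact ((hSV ▸ convex_convexHull ℝ (V : Set (Pt n))).inter
        (convex_halfSpace_ge ⟨l.map_add, l.map_smul⟩ t))
    exact convexHull_min hWF hFconv

lemma isLatticePt_neg {n : ℕ} {x : Pt n} (hx : isLatticePt x) : isLatticePt (-x) := by
  have := isLatticePt_sub isLatticePt_zero hx
  simpa using this

lemma EM0_coe {n : ℕ} : ⇑(EM0 (n := n)) = emb0 (n := n) := rfl

lemma EM1_coe {n : ℕ} : ⇑(EM1 (n := n)) = emb1 (n := n) := rfl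

end Aux

/-- If a full-dimensional lattice polytope `P` is a ℤ-join of faces `F` and
`G`, then `P` is a Cayley join of `F` and `G`. -/
theorem stmt17 {n : ℕ} (S F G : Set (Pt n)) (hS : IsLat (stdL n) S)
    (hdim : dimP S = (n : ℤ)) (hZJ : IsZJoin S F G) :
    IsCayleyJoin S F G := by
  classical
  obtain ⟨hFface, hGface, hconv, hdec⟩ := hZJ
  obtain ⟨V, hVL, hSV⟩ := hS
  have hSconv : Convex ℝ S := hSV ▸ convex_convexHull ℝ _
  have hdimE : dimP (∅ : Set (Pt n)) = -1 := by simp [dimP]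
  rcases F.eq_empty_or_nonempty with hFe | hFne
  · -- degenerate case `F = ∅`, `G = S`
    have hGS : G = S := by
      obtain ⟨WG, _, _, hGhull⟩ := face_lattice_hull hSV hGface
      have hGconv : Convex ℝ G := hGhull ▸ convex_convexHull ℝ _
      rw [hconv, hFe, Set.empty_union, hGconv.convexHull_eq]
    refine ⟨hFface, hGface, ?_, ?_⟩
    · rw [hFe, hGS, hdimE]; ring
    · have h1 : cayley2 F G = emb0 '' S := by
        rw [cayley2, hFe, hGS, Set.image_empty, Set.empty_union, ← EM0_coe,
          (hSconv.affine_image EM0).convexHull_eq]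
      exact ⟨AffineEquiv.refl ℝ (Pt (n + 1)), fun x => Iff.rfl, by simp [h1]⟩
  rcases G.eq_empty_or_nonempty with hGe | hGne
  · -- degenerate case `G = ∅`, `F = S`
    have hFS : F = S := by
      obtain ⟨WF, _, _, hFhull⟩ := face_lattice_hull hSV hFface
      have hFconv : Convex ℝ F := hFhull ▸ convex_convexHull ℝ _
      rw [hconv, hGe, Set.union_empty, hFconv.convexHull_eq]
    refine ⟨hFface, hGface, ?_, ?_⟩
    · rw [hGe, hFS, hdimE]; ring
    · have h1 : cayley2 F G = emb1 '' S := by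
        rw [cayley2, hGe, hFS, Set.image_empty, Set.union_empty, ← EM1_coe,
          (hSconv.affine_image EM1).convexHull_eq]
      set e1 : Pt (n + 1) := Pi.single (Fin.last n) (1 : ℝ) with he1
      have he1lat : isLatticePt e1 := isLatticePt_single_one _
      refine ⟨AffineEquiv.constVAdd ℝ (Pt (n + 1)) (-e1), ?_, ?_⟩
      · intro x
        have hx1 : (AffineEquiv.constVAdd ℝ (Pt (n + 1)) (-e1)) x = -e1 + x := rfl
        constructor
        · intro hx
          rw [hx1]
          exact isLatticePt_add (isLatticePt_neg he1lat) hx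
        · intro hx
          rw [hx1] at hx
          have := isLatticePt_add he1lat hx
          have h2 : e1 + (-e1 + x) = x := by abel
          rwa [h2] at this
      · rw [h1, Set.image_image]
        refine Set.image_congr fun x _ => ?_
        show -e1 + emb1 x = emb0 x
        rw [emb1_eq_emb0_add, ← he1]
        abel
  -- main case: both `F` and `G` nonempty
  obtain ⟨VF, hVFV, hVFF, hFhull⟩ := face_lattice_hull hSV hFface
  obtain ⟨VG, hVGV, hVGG, hGhull⟩ := face_lattice_hull hSV hGface
  have hVFlat : ∀ v ∈ (VF : Set (Pt n)), isLatticePt v := fun v hv => hVL (hVFV hv)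
  have hVGlat : ∀ v ∈ (VG : Set (Pt n)), isLatticePt v := fun v hv => hVL (hVGV hv)
  -- decompositions of the standard basis vectors
  have hdecE := fun i : Fin (n + 1) =>
    hdec (Pi.single i 1) (isLatticePt_single_one i)
  choose q hq hquniq using hdecE
  set pF : Fin (n + 1) → Pt (n + 1) := fun i => (q i).1 with hpFdef
  set pG : Fin (n + 1) → Pt (n + 1) := fun i => (q i).2 with hpGdef
  have hpFlat : ∀ i, isLatticePt (pF i) := fun i => (hq i).1.1
  have hpFmem : ∀ i, pF i ∈ Wspan F := fun i => (hq i).1.2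
  have hpGlat : ∀ i, isLatticePt (pG i) := fun i => (hq i).2.1.1
  have hpGmem : ∀ i, pG i ∈ Wspan G := fun i => (hq i).2.1.2
  have hEsum : ∀ i, (Pi.single i 1 : Pt (n + 1)) = pF i + pG i := fun i => (hq i).2.2
  -- the projection onto `Wspan F` along `Wspan G`
  set Pr : Pt (n + 1) →ₗ[ℝ] Pt (n + 1) :=
    ∑ i, (LinearMap.proj i : Pt (n + 1) →ₗ[ℝ] ℝ).smulRight (pF i) with hPrdef
  have hPr_apply : ∀ y, Pr y = ∑ i, y i • pF i := by
    intro y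
    rw [hPrdef, LinearMap.sum_apply]
    simp [LinearMap.smulRight_apply]
  have hPr_mem : ∀ y, Pr y ∈ Wspan F := by
    intro y
    rw [hPr_apply]
    exact Submodule.sum_mem _ fun i _ => Submodule.smul_mem _ _ (hpFmem i)
  have hPr_lat : ∀ y, isLatticePt y → isLatticePt (Pr y) := by
    intro y hy
    rw [hPr_apply]
    exact isLatticePt_sum _ _ fun i _ => isLatticePt_smul (hy i) (hpFlat i)
  have hPr_compl : ∀ y : Pt (n + 1), y - Pr y = ∑ i, y i • pG i := by
    intro y
    rw [hPr_apply]
    calc y - ∑ i, y i • pF i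
        = (∑ i, y i • (Pi.single i 1 : Pt (n + 1))) - ∑ i, y i • pF i := by
          rw [← pt_eq_sum_single]
      _ = ∑ i, (y i • (Pi.single i 1 : Pt (n + 1)) - y i • pF i) := by
          rw [Finset.sum_sub_distrib]
      _ = ∑ i, y i • pG i := by
          refine Finset.sum_congr rfl fun i _ => ?_
          rw [hEsum i, smul_add]
          abel
  have hcompl_mem : ∀ y : Pt (n + 1), y - Pr y ∈ Wspan G := fun y => by
    rw [hPr_compl]
    exact Submodule.sum_mem _ fun i _ => Submodule.smul_mem _ _ (hpGmem i)
  have hcompl_lat : ∀ y, isLatticePt y → isLatticePt (y - Pr y) := fun y hy => by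
    rw [hPr_compl]
    exact isLatticePt_sum _ _ fun i _ => isLatticePt_smul (hy i) (hpGlat i)
  -- `Pr` is the identity on `Wspan F`
  have hWFgen : Wspan F ≤ Submodule.span ℝ (emb1 '' (VF : Set (Pt n))) := by
    rw [Wspan, Submodule.span_le]
    rintro _ ⟨f, hf, rfl⟩
    rw [hFhull] at hf
    have h1 : emb1 f ∈ ⇑EM1 '' (convexHull ℝ (VF : Set (Pt n))) := ⟨f, hf, EM1_apply f⟩
    rw [AffineMap.image_convexHull, EM1_coe] at h1
    exact convexHull_min Submodule.subset_span (Submodule.convex _) h1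
  have hWGgen : Wspan G ≤ Submodule.span ℝ (emb1 '' (VG : Set (Pt n))) := by
    rw [Wspan, Submodule.span_le]
    rintro _ ⟨g, hg, rfl⟩
    rw [hGhull] at hg
    have h1 : emb1 g ∈ ⇑EM1 '' (convexHull ℝ (VG : Set (Pt n))) := ⟨g, hg, EM1_apply g⟩
    rw [AffineMap.image_convexHull, EM1_coe] at h1
    exact convexHull_min Submodule.subset_span (Submodule.convex _) h1
  have hPr_id : ∀ y ∈ Wspan F, Pr y = y := by
    have hker : Wspan F ≤ LinearMap.ker (Pr - LinearMap.id) := by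
      refine le_trans hWFgen ?_
      rw [Submodule.span_le]
      rintro _ ⟨v, hv, rfl⟩
      rw [SetLike.mem_coe, LinearMap.mem_ker, LinearMap.sub_apply, LinearMap.id_apply,
        sub_eq_zero]
      have hlat : isLatticePt (emb1 v) := isLatticePt_emb1 (hVFlat v hv)
      have hmem : emb1 v ∈ Wspan F := Submodule.subset_span ⟨v, hVFF hv, rfl⟩
      obtain ⟨r, hr, hru⟩ := hdec (emb1 v) hlat
      have h1 := hru (Pr (emb1 v), emb1 v - Pr (emb1 v))
        ⟨⟨hPr_lat _ hlat, hPr_mem _⟩, ⟨hcompl_lat _ hlat, hcompl_mem _⟩, by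
          funext j; simp only [Pi.add_apply, Pi.sub_apply]; ring⟩
      have h2 := hru (emb1 v, 0)
        ⟨⟨hlat, hmem⟩, ⟨isLatticePt_zero, Submodule.zero_mem _⟩, (add_zero _).symm⟩
      exact congrArg Prod.fst (h1.trans h2.symm)
    intro y hy
    have := hker hy
    rwa [LinearMap.mem_ker, LinearMap.sub_apply, LinearMap.id_apply, sub_eq_zero] at this
  have hPr_zero : ∀ y ∈ Wspan G, Pr y = 0 := by
    have hker : Wspan G ≤ LinearMap.ker Pr := by
      refine le_trans hWGgen ?_
      rw [Submodule.span_le]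
      rintro _ ⟨v, hv, rfl⟩
      rw [SetLike.mem_coe, LinearMap.mem_ker]
      have hlat : isLatticePt (emb1 v) := isLatticePt_emb1 (hVGlat v hv)
      have hmem : emb1 v ∈ Wspan G := Submodule.subset_span ⟨v, hVGG hv, rfl⟩
      obtain ⟨r, hr, hru⟩ := hdec (emb1 v) hlat
      have h1 := hru (Pr (emb1 v), emb1 v - Pr (emb1 v))
        ⟨⟨hPr_lat _ hlat, hPr_mem _⟩, ⟨hcompl_lat _ hlat, hcompl_mem _⟩, by
          funext j; simp only [Pi.add_apply, Pi.sub_apply]; ring⟩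
      have h2 := hru (0, emb1 v)
        ⟨⟨isLatticePt_zero, Submodule.zero_mem _⟩, ⟨hlat, hmem⟩, (zero_add _).symm⟩
      exact congrArg Prod.fst (h1.trans h2.symm)
    intro y hy
    have := hker hy
    rwa [LinearMap.mem_ker] at this
  -- rank computation
  have hsup : Wspan F ⊔ Wspan G = ⊤ := by
    rw [eq_top_iff]
    intro y _
    rw [pt_eq_sum_single y]
    refine Submodule.sum_mem _ fun i _ => Submodule.smul_mem _ _ ?_
    rw [hEsum i]
    exact Submodule.add_mem _ (Submodule.mem_sup_left (hpFmem i))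
      (Submodule.mem_sup_right (hpGmem i))
  have hinf : Wspan F ⊓ Wspan G = ⊥ := by
    rw [eq_bot_iff]
    intro y hy
    rw [Submodule.mem_inf] at hy
    rw [Submodule.mem_bot, ← hPr_id y hy.1, hPr_zero y hy.2]
  have hrank : Module.finrank ℝ (Wspan F) + Module.finrank ℝ (Wspan G) = n + 1 := by
    have h := Submodule.finrank_sup_add_finrank_inf_eq (Wspan F) (Wspan G)
    rw [hsup, hinf, finrank_bot, add_zero, finrank_top] at h
    rw [← h, Module.finrank_fin_fun]
  have hdimFG : dimP F + dimP G = dimP S - 1 := by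
    have hF' : dimP F = (dimNat F : ℤ) := by
      rw [dimP, if_neg (Set.Nonempty.ne_empty hFne)]; rfl
    have hG' : dimP G = (dimNat G : ℤ) := by
      rw [dimP, if_neg (Set.Nonempty.ne_empty hGne)]; rfl
    rw [hF', hG', hdim]
    rw [finrank_Wspan hFne, finrank_Wspan hGne] at hrank
    omega
  -- construction of the lattice automorphism
  set e1 : Pt (n + 1) := Pi.single (Fin.last n) (1 : ℝ) with he1
  set a : ℝ := pF (Fin.last n) (Fin.last n) with ha
  have haInt : ∃ k : ℤ, a = (k : ℝ) := hpFlat (Fin.last n) (Fin.last n)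
  set lam : Pt (n + 1) →ₗ[ℝ] ℝ := LinearMap.proj (Fin.last n) with hlam
  set nu : Pt (n + 1) →ₗ[ℝ] ℝ := lam ∘ₗ Pr - a • lam with hnu
  have hnu_apply : ∀ y, nu y = Pr y (Fin.last n) - a * y (Fin.last n) := by
    intro y
    rw [hnu]
    simp [hlam, LinearMap.sub_apply, LinearMap.smul_apply, smul_eq_mul]
  have hPre1 : Pr e1 = pF (Fin.last n) := by
    rw [hPr_apply, Finset.sum_eq_single (Fin.last n)]
    · rw [he1, Pi.single_eq_same, one_smul]
    · intro i _ hi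
      rw [he1, Pi.single_apply, if_neg hi, zero_smul]
    · intro h
      exact absurd (Finset.mem_univ _) h
  have hnu_e1 : nu e1 = 0 := by
    rw [hnu_apply, hPre1, he1, Pi.single_eq_same, mul_one, ← ha, sub_self]
  have hnu_int : ∀ y, isLatticePt y → ∃ k : ℤ, nu y = (k : ℝ) := by
    intro y hy
    obtain ⟨k1, hk1⟩ := hPr_lat y hy (Fin.last n)
    obtain ⟨k2, hk2⟩ := haInt
    obtain ⟨k3, hk3⟩ := hy (Fin.last n)
    exact ⟨k1 - k2 * k3, by rw [hnu_apply, hk1, hk2, hk3]; push_cast; ring⟩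
  have hnu_F : ∀ f ∈ F, nu (emb0 f) = 1 - a := by
    intro f hf
    have hmem : emb1 f ∈ Wspan F := Submodule.subset_span ⟨f, hf, rfl⟩
    have h0 : emb0 f = emb1 f - e1 := by rw [emb1_eq_emb0_add, ← he1]; abel
    rw [h0, map_sub, hnu_e1, sub_zero, hnu_apply, hPr_id _ hmem, emb1_last]
    ring
  have hnu_G : ∀ g ∈ G, nu (emb0 g) = -a := by
    intro g hg
    have hmem : emb1 g ∈ Wspan G := Submodule.subset_span ⟨g, hg, rfl⟩
    have h0 : emb0 g = emb1 g - e1 := by rw [emb1_eq_emb0_add, ← he1]; abel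
    rw [h0, map_sub, hnu_e1, sub_zero, hnu_apply, hPr_zero _ hmem, emb1_last]
    simp
  -- the shear `y ↦ y + ν(y)•e₁` as a linear equivalence
  set Lf : Pt (n + 1) →ₗ[ℝ] Pt (n + 1) := LinearMap.id + nu.smulRight e1 with hLf
  set Lb : Pt (n + 1) →ₗ[ℝ] Pt (n + 1) := LinearMap.id - nu.smulRight e1 with hLb
  have hLf_apply : ∀ y, Lf y = y + nu y • e1 := by
    intro y
    rw [hLf]
    simp [LinearMap.add_apply, LinearMap.smulRight_apply]
  have hLb_apply : ∀ y, Lb y = y - nu y • e1 := by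
    intro y
    rw [hLb]
    simp [LinearMap.sub_apply, LinearMap.smulRight_apply]
  have hfb : Lf ∘ₗ Lb = LinearMap.id := by
    refine LinearMap.ext fun y => ?_
    rw [LinearMap.comp_apply, LinearMap.id_apply, hLb_apply, hLf_apply, map_sub, map_smul,
      hnu_e1, smul_zero, sub_zero]
    abel
  have hbf : Lb ∘ₗ Lf = LinearMap.id := by
    refine LinearMap.ext fun y => ?_
    rw [LinearMap.comp_apply, LinearMap.id_apply, hLf_apply, hLb_apply, map_add, map_smul,
      hnu_e1, smul_zero, add_zero]
    abel
  set LE : Pt (n + 1) ≃ₗ[ℝ] Pt (n + 1) := LinearEquiv.ofLinear Lf Lb hfb hbf with hLE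
  set B : Pt (n + 1) ≃ᵃ[ℝ] Pt (n + 1) :=
    LE.toAffineEquiv.trans (AffineEquiv.constVAdd ℝ (Pt (n + 1)) (a • e1)) with hB
  have hB_apply : ∀ y, B y = y + (nu y + a) • e1 := by
    intro y
    have h1 : B y = a • e1 + Lf y := rfl
    rw [h1, hLf_apply, add_smul]
    abel
  have hBsymm_apply : ∀ z, B.symm z = z - (nu z + a) • e1 := by
    intro z
    have h1 : B (z - (nu z + a) • e1) = z := by
      rw [hB_apply]
      have h2 : nu (z - (nu z + a) • e1) = nu z := by
        rw [map_sub, map_smul, hnu_e1, smul_zero, sub_zero]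
      rw [h2]
      abel
    conv_lhs => rw [← h1]
    rw [AffineEquiv.symm_apply_apply]
  have hBlat : ∀ y, isLatticePt y → isLatticePt (B y) := by
    intro y hy
    rw [hB_apply]
    obtain ⟨k1, hk1⟩ := hnu_int y hy
    obtain ⟨k2, hk2⟩ := haInt
    refine isLatticePt_add hy (isLatticePt_smul ⟨k1 + k2, ?_⟩ (isLatticePt_single_one _))
    rw [hk1, hk2]; push_cast; ring
  have hBsymmlat : ∀ z, isLatticePt z → isLatticePt (B.symm z) := by
    intro z hz
    rw [hBsymm_apply]
    obtain ⟨k1, hk1⟩ := hnu_int z hz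
    obtain ⟨k2, hk2⟩ := haInt
    refine isLatticePt_sub hz (isLatticePt_smul ⟨k1 + k2, ?_⟩ (isLatticePt_single_one _))
    rw [hk1, hk2]; push_cast; ring
  -- image computation
  have hBF : ∀ f ∈ F, B (emb0 f) = emb1 f := by
    intro f hf
    rw [hB_apply, hnu_F f hf]
    rw [sub_add_cancel, one_smul, emb1_eq_emb0_add, ← he1]
  have hBG : ∀ g ∈ G, B (emb0 g) = emb0 g := by
    intro g hg
    rw [hB_apply, hnu_G g hg]
    rw [neg_add_cancel, zero_smul, add_zero]
  have himg : ⇑B '' (emb0 '' S) = cayley2 F G := by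
    have h1 : emb0 '' S = convexHull ℝ (emb0 '' F ∪ emb0 '' G) := by
      rw [hconv, ← EM0_coe, AffineMap.image_convexHull, Set.image_union, EM0_coe]
    have h2 : ⇑B '' (emb0 '' F) = emb1 '' F := by
      rw [Set.image_image]
      exact Set.image_congr fun f hf => hBF f hf
    have h3 : ⇑B '' (emb0 '' G) = emb0 '' G := by
      rw [Set.image_image]
      exact Set.image_congr fun g hg => hBG g hg
    rw [h1, ← AffineEquiv.coe_toAffineMap, AffineMap.image_convexHull,
      AffineEquiv.coe_toAffineMap, Set.image_union, h2, h3, cayley2]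
  refine ⟨hFface, hGface, hdimFG, B.symm, ?_, ?_⟩
  · intro x
    constructor
    · exact hBsymmlat x
    · intro hx
      have := hBlat _ hx
      rwa [AffineEquiv.apply_symm_apply] at this
  · rw [← himg, Set.image_image]
    have : (fun x => B.symm (B x)) '' (emb0 '' S) = id '' (emb0 '' S) :=
      Set.image_congr fun x _ => AffineEquiv.symm_apply_apply B x
    rw [this, Set.image_id]

end GorST
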